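/- Let S be a distributive join-semilattice with zero that is representable, i.e., isomorphic to the join-semilattice Conc L of compact congruences of some lattice L. Then there exists a lattice K such that Conc K is isomorphic to S and every compact congruence of K is principal (Princ K = Conc K). -/

import Mathlib

universe u v

/-- The compactness notion of Mathlib (Dec 2024), restored with its old definition. -/
def CompleteLattice.IsCompactElement {α : Type*} [CompleteLattice α] (k : α) :=
  ∀ s : Set α, k ≤ sSup s → ∃ t : Finset α, ↑t ⊆ s ∧ k ≤ t.sup id

/-- A congruence of a lattice: an equivalence relation compatible with join and meet. -/
structure LatticeCon' (L : Type u) [Lattice L] extends Setoid L where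
  sup_comp : ∀ {a b c d : L}, r a b → r c d → r (a ⊔ c) (b ⊔ d)
  inf_comp : ∀ {a b c d : L}, r a b → r c d → r (a ⊓ c) (b ⊓ d)

namespace LatticeCon'

variable {L : Type u} [Lattice L]

theorem ext' {c d : LatticeCon' L} (h : ∀ a b, c.r a b ↔ d.r a b) : c = d := by
  obtain ⟨cs, _, _⟩ := c
  obtain ⟨ds, _, _⟩ := d
  congr 1
  exact Setoid.ext h

/-- Congruences are ordered by inclusion of the underlying relations. -/
instance : PartialOrder (LatticeCon' L) where
  le c d := ∀ ⦃a b : L⦄, c.r a b → d.r a b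
  le_refl c a b h := h
  le_trans c d e h1 h2 a b h := h2 (h1 h)
  le_antisymm c d h1 h2 := ext' fun a b => ⟨fun h => h1 h, fun h => h2 h⟩

instance : InfSet (LatticeCon' L) where
  sInf S :=
    { r := fun a b => ∀ c ∈ S, c.r a b
      iseqv := ⟨fun a c _ => c.iseqv.refl a,
        fun h c hc => c.iseqv.symm (h c hc),
        fun h1 h2 c hc => c.iseqv.trans (h1 c hc) (h2 c hc)⟩
      sup_comp := fun h1 h2 c hc => c.sup_comp (h1 c hc) (h2 c hc)
      inf_comp := fun h1 h2 c hc => c.inf_comp (h1 c hc) (h2 c hc) }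

/-- The congruence lattice `Con L`. -/
instance : CompleteLattice (LatticeCon' L) :=
  completeLatticeOfInf _ fun S =>
    ⟨fun c hc _ _ h => h c hc, fun c hc _ _ h d hd => hc hd h⟩

/-- A congruence is principal if it is the smallest congruence collapsing some pair. -/
def IsPrincipal (α : LatticeCon' L) : Prop :=
  ∃ a b : L, α.r a b ∧ ∀ β : LatticeCon' L, β.r a b → α ≤ β

/-- `Princ L`: the order of principal congruences of `L`. -/
abbrev Princ (L : Type u) [Lattice L] := {α : LatticeCon' L // α.IsPrincipal}

/-- `Conc L`: the compact congruences of `L`. -/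
abbrev Conc (L : Type u) [Lattice L] := {α : LatticeCon' L // CompleteLattice.IsCompactElement α}

end LatticeCon'

namespace PrincConc

open LatticeCon' CompleteLattice

section Basic

variable {B : Type*} [Lattice B]

lemma le_r {c d : LatticeCon' B} (h : c ≤ d) : ∀ ⦃a b⦄, c.r a b → d.r a b := h

lemma bot_r (a : B) : (⊥ : LatticeCon' B).r a a := by
  have h : (sInf Set.univ : LatticeCon' B).r a a := fun c _ => c.iseqv.refl a
  rw [sInf_univ] at h

/-- The principal congruence generated by a pair. -/
def gen (a b : B) : LatticeCon' B := sInf {c | c.r a b}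

lemma gen_r (a b : B) : (gen a b).r a b := fun _ hc => hc

lemma gen_le {a b : B} {c : LatticeCon' B} (h : c.r a b) : gen a b ≤ c :=
  fun _ _ hxy => hxy c h

lemma isPrincipal_gen (a b : B) : (gen a b).IsPrincipal :=
  ⟨a, b, gen_r a b, fun _ h => gen_le h⟩

lemma IsPrincipal.eq_gen {α : LatticeCon' B} (h : α.IsPrincipal) : ∃ a b, α = gen a b := by
  obtain ⟨a, b, h1, h2⟩ := h
  exact ⟨a, b, le_antisymm (h2 _ (gen_r a b)) (gen_le h1)⟩

lemma r_inf_sup {c : LatticeCon' B} {a b : B} (h : c.r a b) : c.r (a ⊓ b) (a ⊔ b) := by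
  have h1 : c.r (a ⊓ b) b := by simpa using c.inf_comp h (c.iseqv.refl b)
  have h2 : c.r (a ⊔ b) b := by simpa using c.sup_comp h (c.iseqv.refl b)
  exact c.iseqv.trans h1 (c.iseqv.symm h2)

lemma r_of_r_inf_sup {c : LatticeCon' B} {a b : B} (h : c.r (a ⊓ b) (a ⊔ b)) : c.r a b := by
  have h1 : c.r a (a ⊔ b) := by simpa [sup_inf_self, ← sup_assoc] using c.sup_comp (c.iseqv.refl a) h
  have h2 : c.r b (a ⊔ b) := by
    have := c.sup_comp (c.iseqv.refl b) h
    simpa [sup_comm, sup_inf_self, ← sup_assoc, inf_comm] using this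
  exact c.iseqv.trans h1 (c.iseqv.symm h2)

lemma gen_eq_gen_inf_sup (a b : B) : gen a b = gen (a ⊓ b) (a ⊔ b) :=
  le_antisymm (gen_le (r_of_r_inf_sup (gen_r _ _))) (gen_le (r_inf_sup (gen_r _ _)))

open Classical in
/-- The congruence of "being collapsed by a finite join of members of `S`". -/
def finJoins (S : Set (LatticeCon' B)) : LatticeCon' B where
  r x y := ∃ t : Finset (LatticeCon' B), ↑t ⊆ S ∧ (t.sup id).r x y
  iseqv := by
    refine ⟨fun x => ⟨∅, by simp, by simpa [Finset.sup_empty] using bot_r x⟩, ?_, ?_⟩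
    · rintro x y ⟨t, ht, hr⟩
      exact ⟨t, ht, (t.sup id).iseqv.symm hr⟩
    · rintro x y z ⟨t1, ht1, hr1⟩ ⟨t2, ht2, hr2⟩
      refine ⟨t1 ∪ t2, by simp only [Finset.coe_union]; exact Set.union_subset ht1 ht2, ?_⟩
      exact ((t1 ∪ t2).sup id).iseqv.trans
        (le_r (Finset.sup_mono Finset.subset_union_left) hr1)
        (le_r (Finset.sup_mono Finset.subset_union_right) hr2)
  sup_comp := by
    rintro a b c d ⟨t1, ht1, hr1⟩ ⟨t2, ht2, hr2⟩
    refine ⟨t1 ∪ t2, by simp only [Finset.coe_union]; exact Set.union_subset ht1 ht2, ?_⟩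
    exact ((t1 ∪ t2).sup id).sup_comp
      (le_r (Finset.sup_mono Finset.subset_union_left) hr1)
      (le_r (Finset.sup_mono Finset.subset_union_right) hr2)
  inf_comp := by
    rintro a b c d ⟨t1, ht1, hr1⟩ ⟨t2, ht2, hr2⟩
    refine ⟨t1 ∪ t2, by simp only [Finset.coe_union]; exact Set.union_subset ht1 ht2, ?_⟩
    exact ((t1 ∪ t2).sup id).inf_comp
      (le_r (Finset.sup_mono Finset.subset_union_left) hr1)
      (le_r (Finset.sup_mono Finset.subset_union_right) hr2)

lemma isCompactElement_of_isPrincipal {α : LatticeCon' B} (h : α.IsPrincipal) :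
    CompleteLattice.IsCompactElement α := by
  obtain ⟨a, b, hr, hmin⟩ := h
  intro S hS
  have hub : sSup S ≤ finJoins S := sSup_le (fun c hc x y hxy =>
    ⟨{c}, by simpa using hc, by rw [Finset.sup_singleton]; exact hxy⟩)
  obtain ⟨t, htS, htr⟩ := le_r hub (le_r hS hr)
  exact ⟨t, htS, hmin _ htr⟩

lemma isPrincipal_of_isCompact (hne : Nonempty B)
    (H : ∀ α β : LatticeCon' B, α.IsPrincipal → β.IsPrincipal → (α ⊔ β).IsPrincipal)
    {α : LatticeCon' B} (hc : CompleteLattice.IsCompactElement α) : α.IsPrincipal := by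
  have hle : α ≤ sSup {γ : LatticeCon' B | ∃ x y, α.r x y ∧ γ = gen x y} := by
    intro x y hxy
    have hmem : gen x y ∈ {γ : LatticeCon' B | ∃ x y, α.r x y ∧ γ = gen x y} := ⟨x, y, hxy, rfl⟩
    exact le_r (le_sSup hmem) (gen_r x y)
  obtain ⟨t, htS, htle⟩ := hc _ hle
  have hge : t.sup id ≤ α := Finset.sup_le (fun γ hγ => by
    obtain ⟨x, y, hxy, rfl⟩ := htS hγ
    exact gen_le hxy)
  have heq : α = t.sup id := le_antisymm htle hge
  rw [heq]
  have hbot : (⊥ : LatticeCon' B).IsPrincipal := by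
    obtain ⟨x⟩ := hne
    exact ⟨x, x, bot_r x, fun β _ => bot_le⟩
  refine Finset.sup_induction hbot (fun a ha b hb => H a b ha hb) (fun γ hγ => ?_)
  obtain ⟨x, y, _, rfl⟩ := htS hγ
  exact isPrincipal_gen x y

/-- Pull back a congruence along a lattice homomorphism. -/
def conMap {C D : Type*} [Lattice C] [Lattice D] (f : C → D)
    (hs : ∀ a b, f (a ⊔ b) = f a ⊔ f b) (hi : ∀ a b, f (a ⊓ b) = f a ⊓ f b)
    (Θ : LatticeCon' D) : LatticeCon' C where
  r a b := Θ.r (f a) (f b)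
  iseqv := ⟨fun _ => Θ.iseqv.refl _, fun h => Θ.iseqv.symm h, fun h1 h2 => Θ.iseqv.trans h1 h2⟩
  sup_comp := fun {a b c d} h1 h2 => by
    show Θ.r (f (a ⊔ c)) (f (b ⊔ d))
    rw [hs, hs]; exact Θ.sup_comp h1 h2
  inf_comp := fun {a b c d} h1 h2 => by
    show Θ.r (f (a ⊓ c)) (f (b ⊓ d))
    rw [hi, hi]; exact Θ.inf_comp h1 h2

lemma conMap_r {C D : Type*} [Lattice C] [Lattice D] (f : C → D) (hs hi) (Θ : LatticeCon' D)
    (a b : C) : (conMap f hs hi Θ).r a b ↔ Θ.r (f a) (f b) := Iff.rfl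

lemma conMap_mono {C D : Type*} [Lattice C] [Lattice D] (f : C → D) (hs hi)
    {Θ Θ' : LatticeCon' D} (h : Θ ≤ Θ') : conMap f hs hi Θ ≤ conMap f hs hi Θ' :=
  fun _ _ hr => h hr

end Basic


section M3

variable {B : Type*} [Lattice B]

/-- One component of the Boolean-triple closure. -/
def tc (a b d : B) : B := (a ⊔ b) ⊓ (a ⊔ d)

lemma tc_comm (a b d : B) : tc a b d = tc a d b := inf_comm _ _

lemma le_tc (a b d : B) : a ≤ tc a b d := le_inf le_sup_left le_sup_left

lemma tc_le_left (a b d : B) : tc a b d ≤ a ⊔ b := inf_le_left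

lemma tc_le_right (a b d : B) : tc a b d ≤ a ⊔ d := inf_le_right

lemma tc_mono {a b d a' b' d' : B} (ha : a ≤ a') (hb : b ≤ b') (hd : d ≤ d') :
    tc a b d ≤ tc a' b' d' :=
  inf_le_inf (sup_le_sup ha hb) (sup_le_sup ha hd)

lemma tc_idem (x y z : B) : tc (tc x y z) (tc y x z) (tc z x y) = tc x y z := by
  refine le_antisymm ?_ (le_tc _ _ _)
  refine inf_le_inf (sup_le (tc_le_left x y z) ?_) (sup_le (tc_le_right x y z) ?_)
  · exact (tc_le_left y x z).trans (le_of_eq (sup_comm _ _))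
  · exact (tc_le_left z x y).trans (le_of_eq (sup_comm _ _))

/-- The Boolean-triple closure operator on `B × B × B`. -/
def pcl (t : B × B × B) : B × B × B :=
  (tc t.1 t.2.1 t.2.2, tc t.2.1 t.1 t.2.2, tc t.2.2 t.1 t.2.1)

lemma le_pcl (t : B × B × B) : t ≤ pcl t :=
  ⟨le_tc _ _ _, le_tc _ _ _, le_tc _ _ _⟩

lemma pcl_mono {t s : B × B × B} (h : t ≤ s) : pcl t ≤ pcl s :=
  ⟨tc_mono h.1 h.2.1 h.2.2, tc_mono h.2.1 h.1 h.2.2, tc_mono h.2.2 h.1 h.2.1⟩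

lemma pcl_idem (t : B × B × B) : pcl (pcl t) = pcl t := by
  obtain ⟨x, y, z⟩ := t
  show (tc (tc x y z) (tc y x z) (tc z x y), tc (tc y x z) (tc x y z) (tc z x y),
    tc (tc z x y) (tc x y z) (tc y x z)) = _
  refine Prod.ext (tc_idem x y z) (Prod.ext ?_ ?_)
  · show tc (tc y x z) (tc x y z) (tc z x y) = tc y x z
    rw [show tc z x y = tc z y x from tc_comm _ _ _]
    exact tc_idem y x z
  · show tc (tc z x y) (tc x y z) (tc y x z) = tc z x y
    rw [show tc x y z = tc x z y from tc_comm _ _ _,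
      show tc y x z = tc y z x from tc_comm _ _ _]
    exact tc_idem z x y

lemma pcl_inf {t s : B × B × B} (ht : pcl t = t) (hs : pcl s = s) : pcl (t ⊓ s) = t ⊓ s := by
  refine le_antisymm ?_ (le_pcl _)
  have h1 : pcl (t ⊓ s) ≤ pcl t := pcl_mono inf_le_left
  have h2 : pcl (t ⊓ s) ≤ pcl s := pcl_mono inf_le_right
  rw [ht] at h1; rw [hs] at h2
  exact le_inf h1 h2

variable (B) in
/-- The lattice of Boolean triples `M3[B]`. -/
def M3 : Type _ := {t : B × B × B // pcl t = t}

namespace M3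

instance instPartialOrder : PartialOrder (M3 B) := Subtype.partialOrder _

lemma le_iff' {t s : M3 B} : t ≤ s ↔ t.1 ≤ s.1 := Iff.rfl

instance instLattice : Lattice (M3 B) where
  sup t s := ⟨pcl (t.1 ⊔ s.1), pcl_idem _⟩
  le_sup_left t s := le_iff'.2 ((le_sup_left : t.1 ≤ t.1 ⊔ s.1).trans (le_pcl _))
  le_sup_right t s := le_iff'.2 ((le_sup_right : s.1 ≤ t.1 ⊔ s.1).trans (le_pcl _))
  sup_le t s w h1 h2 := by
    have h := pcl_mono (sup_le (le_iff'.1 h1) (le_iff'.1 h2))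
    rw [w.2] at h
    exact le_iff'.2 h
  inf t s := ⟨t.1 ⊓ s.1, pcl_inf t.2 s.2⟩
  inf_le_left t s := le_iff'.2 inf_le_left
  inf_le_right t s := le_iff'.2 inf_le_right
  le_inf t s w h1 h2 := le_iff'.2 (le_inf (le_iff'.1 h1) (le_iff'.1 h2))

lemma sup_val (t s : M3 B) : (t ⊔ s).1 = pcl (t.1 ⊔ s.1) := rfl

lemma inf_val (t s : M3 B) : (t ⊓ s).1 = t.1 ⊓ s.1 := rfl

/-- The diagonal embedding `B → M3 B`. -/
def diag (a : B) : M3 B := ⟨(a, a, a), by simp [pcl, tc]⟩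

lemma diag_sup (a b : B) : diag (a ⊔ b) = diag a ⊔ diag b := by
  refine Subtype.ext ?_
  show (a ⊔ b, a ⊔ b, a ⊔ b) = pcl ((a, a, a) ⊔ (b, b, b))
  show (a ⊔ b, a ⊔ b, a ⊔ b) = pcl (a ⊔ b, a ⊔ b, a ⊔ b)
  simp [pcl, tc]

lemma diag_inf (a b : B) : diag (a ⊓ b) = diag a ⊓ diag b := Subtype.ext rfl

lemma diag_le_iff {a b : B} : diag a ≤ diag b ↔ a ≤ b := by
  constructor
  · intro h
    exact (h : ((a, a, a) : B × B × B) ≤ (b, b, b)).1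
  · intro h
    exact (⟨h, h, h⟩ : ((a, a, a) : B × B × B) ≤ (b, b, b))

lemma diag_injective : Function.Injective (diag (B := B)) := fun a b h =>
  congrArg (fun t : M3 B => t.1.1) h

end M3

end M3


section Booleans

variable {B : Type*} [Lattice B]

lemma isBool_app {p a : B} (h : p ≤ a) : pcl (a, p, p) = ((a, p, p) : B × B × B) := by
  simp [pcl, tc, sup_eq_left.2 h, sup_eq_right.2 h, inf_eq_right.2 h]

lemma isBool_pap {p a : B} (h : p ≤ a) : pcl (p, a, p) = ((p, a, p) : B × B × B) := by
  simp [pcl, tc, sup_eq_left.2 h, sup_eq_right.2 h, inf_eq_right.2 h, inf_eq_left.2 h]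

lemma isBool_ppa {p a : B} (h : p ≤ a) : pcl (p, p, a) = ((p, p, a) : B × B × B) := by
  simp [pcl, tc, sup_eq_left.2 h, sup_eq_right.2 h, inf_eq_right.2 h, inf_eq_left.2 h]

lemma isBool_aaq {q a : B} (h : a ≤ q) : pcl (a, a, q) = ((a, a, q) : B × B × B) := by
  simp [pcl, tc, sup_eq_left.2 h, sup_eq_right.2 h, inf_eq_right.2 h, inf_eq_left.2 h]

lemma isBool_aqa {q a : B} (h : a ≤ q) : pcl (a, q, a) = ((a, q, a) : B × B × B) := by
  simp [pcl, tc, sup_eq_left.2 h, sup_eq_right.2 h, inf_eq_right.2 h, inf_eq_left.2 h]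

lemma isBool_pair (a c : B) : pcl (a, c, a ⊓ c) = ((a, c, a ⊓ c) : B × B × B) := by
  have h1 : a ⊔ a ⊓ c = a := sup_inf_self
  have h2 : c ⊔ a ⊓ c = c := by rw [inf_comm]; exact sup_inf_self
  have h3 : a ⊓ c ⊔ a = a := sup_eq_right.2 inf_le_left
  have h4 : a ⊓ c ⊔ c = c := sup_eq_right.2 inf_le_right
  have h5 : (a ⊔ c) ⊓ a = a := inf_eq_right.2 le_sup_left
  have h6 : (c ⊔ a) ⊓ c = c := inf_eq_right.2 le_sup_left
  simp [pcl, tc, h1, h2, h3, h4, h5, h6]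

namespace M3

/-- Smart constructor for `M3 B`. -/
def mk (t : B × B × B) (ht : pcl t = t) : M3 B := ⟨t, ht⟩

@[simp] lemma mk_val (t : B × B × B) (ht : pcl t = t) : (mk t ht).1 = t := rfl

/-- Lift a congruence componentwise to Boolean triples. -/
def hat (θ : LatticeCon' B) : LatticeCon' (M3 B) where
  r t s := θ.r t.1.1 s.1.1 ∧ θ.r t.1.2.1 s.1.2.1 ∧ θ.r t.1.2.2 s.1.2.2
  iseqv := ⟨fun _ => ⟨θ.iseqv.refl _, θ.iseqv.refl _, θ.iseqv.refl _⟩,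
    fun h => ⟨θ.iseqv.symm h.1, θ.iseqv.symm h.2.1, θ.iseqv.symm h.2.2⟩,
    fun h h' => ⟨θ.iseqv.trans h.1 h'.1, θ.iseqv.trans h.2.1 h'.2.1,
      θ.iseqv.trans h.2.2 h'.2.2⟩⟩
  sup_comp := by
    rintro a b c d ⟨h1, h2, h3⟩ ⟨g1, g2, g3⟩
    have s1 := θ.sup_comp h1 g1
    have s2 := θ.sup_comp h2 g2
    have s3 := θ.sup_comp h3 g3
    exact ⟨θ.inf_comp (θ.sup_comp s1 s2) (θ.sup_comp s1 s3),
      θ.inf_comp (θ.sup_comp s2 s1) (θ.sup_comp s2 s3),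
      θ.inf_comp (θ.sup_comp s3 s1) (θ.sup_comp s3 s2)⟩
  inf_comp := by
    rintro a b c d ⟨h1, h2, h3⟩ ⟨g1, g2, g3⟩
    exact ⟨θ.inf_comp h1 g1, θ.inf_comp h2 g2, θ.inf_comp h3 g3⟩

lemma hat_r (θ : LatticeCon' B) (t s : M3 B) :
    (hat θ).r t s ↔ θ.r t.1.1 s.1.1 ∧ θ.r t.1.2.1 s.1.2.1 ∧ θ.r t.1.2.2 s.1.2.2 := Iff.rfl

lemma hat_mono {θ θ' : LatticeCon' B} (h : θ ≤ θ') : hat θ ≤ hat θ' :=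
  fun _ _ ht => ⟨h ht.1, h ht.2.1, h ht.2.2⟩

/-- Restriction along the diagonal embedding. -/
def dres (Θ : LatticeCon' (M3 B)) : LatticeCon' B :=
  conMap diag (fun a b => diag_sup a b) (fun a b => diag_inf a b) Θ

lemma dres_r (Θ : LatticeCon' (M3 B)) (a b : B) :
    (dres Θ).r a b ↔ Θ.r (diag a) (diag b) := Iff.rfl

lemma dres_mono {Θ Θ' : LatticeCon' (M3 B)} (h : Θ ≤ Θ') : dres Θ ≤ dres Θ' :=
  conMap_mono _ _ _ h

lemma dres_hat (θ : LatticeCon' B) : dres (hat θ) = θ :=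
  ext' fun _ _ => ⟨fun h => h.1, fun h => ⟨h, h, h⟩⟩

/- Computation lemmas in `M3 B`. -/

section Comp

variable {p q a b x y z : B}

lemma inf_qpp (hb : pcl ((x, y, z) : B × B × B) = (x, y, z)) (hpq : p ≤ q) (hpx : p ≤ x)
    (hxq : x ≤ q) (hpy : p ≤ y) (hpz : p ≤ z) :
    mk (x, y, z) hb ⊓ mk (q, p, p) (isBool_app hpq) = mk (x, p, p) (isBool_app hpx) := by
  refine Subtype.ext ?_
  show ((x ⊓ q, y ⊓ p, z ⊓ p) : B × B × B) = (x, p, p)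
  simp [inf_eq_left.2 hxq, inf_eq_right.2 hpy, inf_eq_right.2 hpz]

lemma inf_pqp (hb : pcl ((x, y, z) : B × B × B) = (x, y, z)) (hpq : p ≤ q) (hpx : p ≤ x)
    (hyq : y ≤ q) (hpy : p ≤ y) (hpz : p ≤ z) :
    mk (x, y, z) hb ⊓ mk (p, q, p) (isBool_pap hpq) = mk (p, y, p) (isBool_pap hpy) := by
  refine Subtype.ext ?_
  show ((x ⊓ p, y ⊓ q, z ⊓ p) : B × B × B) = (p, y, p)
  simp [inf_eq_left.2 hyq, inf_eq_right.2 hpx, inf_eq_right.2 hpz]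

lemma inf_ppq (hb : pcl ((x, y, z) : B × B × B) = (x, y, z)) (hpq : p ≤ q) (hpx : p ≤ x)
    (hzq : z ≤ q) (hpy : p ≤ y) (hpz : p ≤ z) :
    mk (x, y, z) hb ⊓ mk (p, p, q) (isBool_ppa hpq) = mk (p, p, z) (isBool_ppa hpz) := by
  refine Subtype.ext ?_
  show ((x ⊓ p, y ⊓ p, z ⊓ q) : B × B × B) = (p, p, z)
  simp [inf_eq_left.2 hzq, inf_eq_right.2 hpx, inf_eq_right.2 hpy]

lemma sup_app_ppq (hpa : p ≤ a) (haq : a ≤ q) (hpq : p ≤ q) :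
    mk (a, p, p) (isBool_app hpa) ⊔ mk (p, p, q) (isBool_ppa hpq)
      = mk (a, a, q) (isBool_aaq haq) := by
  refine Subtype.ext ?_
  show pcl ((a ⊔ p, p ⊔ p, p ⊔ q) : B × B × B) = (a, a, q)
  simp [pcl, tc, sup_eq_left.2 hpa, sup_eq_right.2 hpa, sup_eq_left.2 haq, sup_eq_right.2 haq,
    sup_eq_left.2 hpq, sup_eq_right.2 hpq, inf_eq_left.2 haq, inf_eq_right.2 haq]

lemma inf_aaq_pqp (hpa : p ≤ a) (haq : a ≤ q) (hpq : p ≤ q) :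
    mk (a, a, q) (isBool_aaq haq) ⊓ mk (p, q, p) (isBool_pap hpq)
      = mk (p, a, p) (isBool_pap hpa) := by
  refine Subtype.ext ?_
  show ((a ⊓ p, a ⊓ q, q ⊓ p) : B × B × B) = (p, a, p)
  simp [inf_eq_right.2 hpa, inf_eq_left.2 haq, inf_eq_right.2 hpq]

lemma sup_pap_ppq (hpa : p ≤ a) (haq : a ≤ q) (hpq : p ≤ q) :
    mk (p, a, p) (isBool_pap hpa) ⊔ mk (p, p, q) (isBool_ppa hpq)
      = mk (a, a, q) (isBool_aaq haq) := by
  refine Subtype.ext ?_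
  show pcl ((p ⊔ p, a ⊔ p, p ⊔ q) : B × B × B) = (a, a, q)
  simp [pcl, tc, sup_eq_left.2 hpa, sup_eq_right.2 hpa, sup_eq_left.2 haq, sup_eq_right.2 haq,
    sup_eq_left.2 hpq, sup_eq_right.2 hpq, inf_eq_left.2 haq, inf_eq_right.2 haq]

lemma inf_aaq_qpp (hpa : p ≤ a) (haq : a ≤ q) (hpq : p ≤ q) :
    mk (a, a, q) (isBool_aaq haq) ⊓ mk (q, p, p) (isBool_app hpq)
      = mk (a, p, p) (isBool_app hpa) := by
  refine Subtype.ext ?_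
  show ((a ⊓ q, a ⊓ p, q ⊓ p) : B × B × B) = (a, p, p)
  simp [inf_eq_right.2 hpa, inf_eq_left.2 haq, inf_eq_right.2 hpq]

lemma sup_app_pqp (hpa : p ≤ a) (haq : a ≤ q) (hpq : p ≤ q) :
    mk (a, p, p) (isBool_app hpa) ⊔ mk (p, q, p) (isBool_pap hpq)
      = mk (a, q, a) (isBool_aqa haq) := by
  refine Subtype.ext ?_
  show pcl ((a ⊔ p, p ⊔ q, p ⊔ p) : B × B × B) = (a, q, a)
  simp [pcl, tc, sup_eq_left.2 hpa, sup_eq_right.2 hpa, sup_eq_left.2 haq, sup_eq_right.2 haq,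
    sup_eq_left.2 hpq, sup_eq_right.2 hpq, inf_eq_left.2 haq, inf_eq_right.2 haq]

lemma inf_aqa_ppq (hpa : p ≤ a) (haq : a ≤ q) (hpq : p ≤ q) :
    mk (a, q, a) (isBool_aqa haq) ⊓ mk (p, p, q) (isBool_ppa hpq)
      = mk (p, p, a) (isBool_ppa hpa) := by
  refine Subtype.ext ?_
  show ((a ⊓ p, q ⊓ p, a ⊓ q) : B × B × B) = (p, p, a)
  simp [inf_eq_right.2 hpa, inf_eq_left.2 haq, inf_eq_right.2 hpq]

lemma sup_ppa_pqp (hpa : p ≤ a) (haq : a ≤ q) (hpq : p ≤ q) :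
    mk (p, p, a) (isBool_ppa hpa) ⊔ mk (p, q, p) (isBool_pap hpq)
      = mk (a, q, a) (isBool_aqa haq) := by
  refine Subtype.ext ?_
  show pcl ((p ⊔ p, p ⊔ q, a ⊔ p) : B × B × B) = (a, q, a)
  simp [pcl, tc, sup_eq_left.2 hpa, sup_eq_right.2 hpa, sup_eq_left.2 haq, sup_eq_right.2 haq,
    sup_eq_left.2 hpq, sup_eq_right.2 hpq, inf_eq_left.2 haq, inf_eq_right.2 haq]

lemma inf_aqa_qpp (hpa : p ≤ a) (haq : a ≤ q) (hpq : p ≤ q) :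
    mk (a, q, a) (isBool_aqa haq) ⊓ mk (q, p, p) (isBool_app hpq)
      = mk (a, p, p) (isBool_app hpa) := by
  refine Subtype.ext ?_
  show ((a ⊓ q, q ⊓ p, a ⊓ p) : B × B × B) = (a, p, p)
  simp [inf_eq_right.2 hpa, inf_eq_left.2 haq, inf_eq_right.2 hpq]

lemma sup_app_pap (hpa : p ≤ a) :
    mk (a, p, p) (isBool_app hpa) ⊔ mk (p, a, p) (isBool_pap hpa) = diag a := by
  refine Subtype.ext ?_
  show pcl ((a ⊔ p, p ⊔ a, p ⊔ p) : B × B × B) = (a, a, a)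
  simp [pcl, tc, sup_eq_left.2 hpa, sup_eq_right.2 hpa]

lemma inf_diag_qpp (hpa : p ≤ a) (haq : a ≤ q) (hpq : p ≤ q) :
    (diag a : M3 B) ⊓ mk (q, p, p) (isBool_app hpq) = mk (a, p, p) (isBool_app hpa) := by
  refine Subtype.ext ?_
  show ((a ⊓ q, a ⊓ p, a ⊓ p) : B × B × B) = (a, p, p)
  simp [inf_eq_left.2 haq, inf_eq_right.2 hpa]

lemma inf_diag_pqp (hpa : p ≤ a) (haq : a ≤ q) (hpq : p ≤ q) :
    (diag a : M3 B) ⊓ mk (p, q, p) (isBool_pap hpq) = mk (p, a, p) (isBool_pap hpa) := by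
  refine Subtype.ext ?_
  show ((a ⊓ p, a ⊓ q, a ⊓ p) : B × B × B) = (p, a, p)
  simp [inf_eq_left.2 haq, inf_eq_right.2 hpa]

lemma inf_diag_ppq (hpa : p ≤ a) (haq : a ≤ q) (hpq : p ≤ q) :
    (diag a : M3 B) ⊓ mk (p, p, q) (isBool_ppa hpq) = mk (p, p, a) (isBool_ppa hpa) := by
  refine Subtype.ext ?_
  show ((a ⊓ p, a ⊓ p, a ⊓ q) : B × B × B) = (p, p, a)
  simp [inf_eq_left.2 haq, inf_eq_right.2 hpa]

lemma sup_app_pyp (hpx : p ≤ x) (hpy : p ≤ y) :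
    mk (x, p, p) (isBool_app hpx) ⊔ mk (p, y, p) (isBool_pap hpy)
      = mk (x, y, x ⊓ y) (isBool_pair x y) := by
  refine Subtype.ext ?_
  show pcl ((x ⊔ p, p ⊔ y, p ⊔ p) : B × B × B) = (x, y, x ⊓ y)
  have h5 : (x ⊔ y) ⊓ x = x := inf_eq_right.2 le_sup_left
  have h6 : (y ⊔ x) ⊓ y = y := inf_eq_right.2 le_sup_left
  simp [pcl, tc, sup_eq_left.2 hpx, sup_eq_right.2 hpx, sup_eq_left.2 hpy, sup_eq_right.2 hpy,
    h5, h6]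

lemma sup_pair_ppz (hb : pcl ((x, y, z) : B × B × B) = (x, y, z)) (hpx : p ≤ x) (hpy : p ≤ y)
    (hpz : p ≤ z) :
    mk (x, y, x ⊓ y) (isBool_pair x y) ⊔ mk (p, p, z) (isBool_ppa hpz) = mk (x, y, z) hb := by
  have hb1 : (x ⊔ y) ⊓ (x ⊔ z) = x := congrArg (fun t : B × B × B => t.1) hb
  have hb2 : (y ⊔ x) ⊓ (y ⊔ z) = y := congrArg (fun t : B × B × B => t.2.1) hb
  have hb3 : (z ⊔ x) ⊓ (z ⊔ y) = z := congrArg (fun t : B × B × B => t.2.2) hb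
  refine Subtype.ext ?_
  show pcl ((x ⊔ p, y ⊔ p, x ⊓ y ⊔ z) : B × B × B) = (x, y, z)
  rw [sup_eq_left.2 hpx, sup_eq_left.2 hpy]
  show ((x ⊔ y) ⊓ (x ⊔ (x ⊓ y ⊔ z)), (y ⊔ x) ⊓ (y ⊔ (x ⊓ y ⊔ z)),
    (x ⊓ y ⊔ z ⊔ x) ⊓ (x ⊓ y ⊔ z ⊔ y)) = (x, y, z)
  have e1 : x ⊔ (x ⊓ y ⊔ z) = x ⊔ z := by rw [← sup_assoc, sup_inf_self]
  have e2 : y ⊔ (x ⊓ y ⊔ z) = y ⊔ z := by rw [← sup_assoc, inf_comm, sup_inf_self]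
  have e3 : x ⊓ y ⊔ z ⊔ x = z ⊔ x := by
    rw [sup_assoc]; exact sup_eq_right.2 (inf_le_left.trans le_sup_right)
  have e4 : x ⊓ y ⊔ z ⊔ y = z ⊔ y := by
    rw [sup_assoc]; exact sup_eq_right.2 (inf_le_right.trans le_sup_right)
  rw [e1, e2, e3, e4, hb1, hb2, hb3]

end Comp

section Transfer

variable {Θ : LatticeCon' (M3 B)} {p q a b : B}

lemma diag_of_first (hpq : p ≤ q) (hpa : p ≤ a) (haq : a ≤ q) (hpb : p ≤ b) (hbq : b ≤ q)
    (h : Θ.r (mk (a, p, p) (isBool_app hpa)) (mk (b, p, p) (isBool_app hpb))) :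
    Θ.r (diag a) (diag b) := by
  have h2 : Θ.r (mk (p, a, p) (isBool_pap hpa)) (mk (p, b, p) (isBool_pap hpb)) := by
    have j := Θ.sup_comp h (Θ.iseqv.refl (mk (p, p, q) (isBool_ppa hpq)))
    rw [sup_app_ppq hpa haq hpq, sup_app_ppq hpb hbq hpq] at j
    have m := Θ.inf_comp j (Θ.iseqv.refl (mk (p, q, p) (isBool_pap hpq)))
    rw [inf_aaq_pqp hpa haq hpq, inf_aaq_pqp hpb hbq hpq] at m
    exact m
  have j2 := Θ.sup_comp h h2
  rw [sup_app_pap hpa, sup_app_pap hpb] at j2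
  exact j2

lemma first_of_second (hpq : p ≤ q) (hpa : p ≤ a) (haq : a ≤ q) (hpb : p ≤ b) (hbq : b ≤ q)
    (h : Θ.r (mk (p, a, p) (isBool_pap hpa)) (mk (p, b, p) (isBool_pap hpb))) :
    Θ.r (mk (a, p, p) (isBool_app hpa)) (mk (b, p, p) (isBool_app hpb)) := by
  have j := Θ.sup_comp h (Θ.iseqv.refl (mk (p, p, q) (isBool_ppa hpq)))
  rw [sup_pap_ppq hpa haq hpq, sup_pap_ppq hpb hbq hpq] at j
  have m := Θ.inf_comp j (Θ.iseqv.refl (mk (q, p, p) (isBool_app hpq)))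
  rw [inf_aaq_qpp hpa haq hpq, inf_aaq_qpp hpb hbq hpq] at m
  exact m

lemma first_of_third (hpq : p ≤ q) (hpa : p ≤ a) (haq : a ≤ q) (hpb : p ≤ b) (hbq : b ≤ q)
    (h : Θ.r (mk (p, p, a) (isBool_ppa hpa)) (mk (p, p, b) (isBool_ppa hpb))) :
    Θ.r (mk (a, p, p) (isBool_app hpa)) (mk (b, p, p) (isBool_app hpb)) := by
  have j := Θ.sup_comp h (Θ.iseqv.refl (mk (p, q, p) (isBool_pap hpq)))
  rw [sup_ppa_pqp hpa haq hpq, sup_ppa_pqp hpb hbq hpq] at j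
  have m := Θ.inf_comp j (Θ.iseqv.refl (mk (q, p, p) (isBool_app hpq)))
  rw [inf_aqa_qpp hpa haq hpq, inf_aqa_qpp hpb hbq hpq] at m
  exact m

end Transfer

section Main

variable {Θ : LatticeCon' (M3 B)}

lemma diag_r_of_r {T S : M3 B} (h : Θ.r T S) :
    Θ.r (diag T.1.1) (diag S.1.1) ∧ Θ.r (diag T.1.2.1) (diag S.1.2.1) ∧
      Θ.r (diag T.1.2.2) (diag S.1.2.2) := by
  obtain ⟨⟨x, y, z⟩, hbT⟩ := T
  obtain ⟨⟨x', y', z'⟩, hbS⟩ := S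
  set p : B := x ⊓ y ⊓ z ⊓ x' ⊓ y' ⊓ z' with hp
  set q : B := x ⊔ y ⊔ z ⊔ x' ⊔ y' ⊔ z' with hq
  have hpx : p ≤ x := ((((inf_le_left.trans inf_le_left).trans inf_le_left).trans
    inf_le_left).trans inf_le_left)
  have hpy : p ≤ y := (((inf_le_left.trans inf_le_left).trans inf_le_left).trans
    inf_le_left).trans inf_le_right
  have hpz : p ≤ z := ((inf_le_left.trans inf_le_left).trans inf_le_left).trans inf_le_right
  have hpx' : p ≤ x' := (inf_le_left.trans inf_le_left).trans inf_le_right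
  have hpy' : p ≤ y' := inf_le_left.trans inf_le_right
  have hpz' : p ≤ z' := inf_le_right
  have hxq : x ≤ q := le_sup_left.trans <| le_sup_left.trans <| le_sup_left.trans <|
    le_sup_left.trans le_sup_left
  have hyq : y ≤ q := le_sup_right.trans <| le_sup_left.trans <| le_sup_left.trans <|
    le_sup_left.trans le_sup_left
  have hzq : z ≤ q := le_sup_right.trans <| le_sup_left.trans <| le_sup_left.trans le_sup_left
  have hx'q : x' ≤ q := le_sup_right.trans <| le_sup_left.trans le_sup_left
  have hy'q : y' ≤ q := le_sup_right.trans le_sup_left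
  have hz'q : z' ≤ q := le_sup_right
  have hpq : p ≤ q := hpx.trans hxq
  refine ⟨?_, ?_, ?_⟩
  · have m := Θ.inf_comp h (Θ.iseqv.refl (mk (q, p, p) (isBool_app hpq)))
    rw [show (⟨(x, y, z), hbT⟩ : M3 B) = mk (x, y, z) hbT from rfl,
      show (⟨(x', y', z'), hbS⟩ : M3 B) = mk (x', y', z') hbS from rfl] at m
    rw [inf_qpp hbT hpq hpx hxq hpy hpz, inf_qpp hbS hpq hpx' hx'q hpy' hpz'] at m
    exact diag_of_first hpq hpx hxq hpx' hx'q m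
  · have m := Θ.inf_comp h (Θ.iseqv.refl (mk (p, q, p) (isBool_pap hpq)))
    rw [show (⟨(x, y, z), hbT⟩ : M3 B) = mk (x, y, z) hbT from rfl,
      show (⟨(x', y', z'), hbS⟩ : M3 B) = mk (x', y', z') hbS from rfl] at m
    rw [inf_pqp hbT hpq hpx hyq hpy hpz, inf_pqp hbS hpq hpx' hy'q hpy' hpz'] at m
    have m2 := first_of_second hpq hpy hyq hpy' hy'q m
    exact diag_of_first hpq hpy hyq hpy' hy'q m2
  · have m := Θ.inf_comp h (Θ.iseqv.refl (mk (p, p, q) (isBool_ppa hpq)))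
    rw [show (⟨(x, y, z), hbT⟩ : M3 B) = mk (x, y, z) hbT from rfl,
      show (⟨(x', y', z'), hbS⟩ : M3 B) = mk (x', y', z') hbS from rfl] at m
    rw [inf_ppq hbT hpq hpx hzq hpy hpz, inf_ppq hbS hpq hpx' hz'q hpy' hpz'] at m
    have m2 := first_of_third hpq hpz hzq hpz' hz'q m
    exact diag_of_first hpq hpz hzq hpz' hz'q m2

lemma r_of_diag_r {T S : M3 B} (h1 : Θ.r (diag T.1.1) (diag S.1.1))
    (h2 : Θ.r (diag T.1.2.1) (diag S.1.2.1)) (h3 : Θ.r (diag T.1.2.2) (diag S.1.2.2)) :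
    Θ.r T S := by
  obtain ⟨⟨x, y, z⟩, hbT⟩ := T
  obtain ⟨⟨x', y', z'⟩, hbS⟩ := S
  simp only at h1 h2 h3
  set p : B := x ⊓ y ⊓ z ⊓ x' ⊓ y' ⊓ z' with hp
  set q : B := x ⊔ y ⊔ z ⊔ x' ⊔ y' ⊔ z' with hq
  have hpx : p ≤ x := ((((inf_le_left.trans inf_le_left).trans inf_le_left).trans
    inf_le_left).trans inf_le_left)
  have hpy : p ≤ y := (((inf_le_left.trans inf_le_left).trans inf_le_left).trans
    inf_le_left).trans inf_le_right
  have hpz : p ≤ z := ((inf_le_left.trans inf_le_left).trans inf_le_left).trans inf_le_right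
  have hpx' : p ≤ x' := (inf_le_left.trans inf_le_left).trans inf_le_right
  have hpy' : p ≤ y' := inf_le_left.trans inf_le_right
  have hpz' : p ≤ z' := inf_le_right
  have hxq : x ≤ q := le_sup_left.trans <| le_sup_left.trans <| le_sup_left.trans <|
    le_sup_left.trans le_sup_left
  have hyq : y ≤ q := le_sup_right.trans <| le_sup_left.trans <| le_sup_left.trans <|
    le_sup_left.trans le_sup_left
  have hzq : z ≤ q := le_sup_right.trans <| le_sup_left.trans <| le_sup_left.trans le_sup_left
  have hx'q : x' ≤ q := le_sup_right.trans <| le_sup_left.trans le_sup_left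
  have hy'q : y' ≤ q := le_sup_right.trans le_sup_left
  have hz'q : z' ≤ q := le_sup_right
  have hpq : p ≤ q := hpx.trans hxq
  have m1 := Θ.inf_comp h1 (Θ.iseqv.refl (mk (q, p, p) (isBool_app hpq)))
  rw [inf_diag_qpp hpx hxq hpq, inf_diag_qpp hpx' hx'q hpq] at m1
  have m2 := Θ.inf_comp h2 (Θ.iseqv.refl (mk (p, q, p) (isBool_pap hpq)))
  rw [inf_diag_pqp hpy hyq hpq, inf_diag_pqp hpy' hy'q hpq] at m2
  have m3 := Θ.inf_comp h3 (Θ.iseqv.refl (mk (p, p, q) (isBool_ppa hpq)))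
  rw [inf_diag_ppq hpz hzq hpq, inf_diag_ppq hpz' hz'q hpq] at m3
  have j1 := Θ.sup_comp m1 m2
  rw [sup_app_pyp hpx hpy, sup_app_pyp hpx' hpy'] at j1
  have j2 := Θ.sup_comp j1 m3
  rw [sup_pair_ppz hbT hpx hpy hpz, sup_pair_ppz hbS hpx' hpy' hpz'] at j2
  exact j2

/-- The key step: every congruence of `M3 B` is the lift of its diagonal restriction. -/
lemma hat_dres (Θ : LatticeCon' (M3 B)) : hat (dres Θ) = Θ := by
  refine ext' fun T S => ⟨fun h => ?_, fun h => ?_⟩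
  · exact r_of_diag_r h.1 h.2.1 h.2.2
  · exact diag_r_of_r h

lemma dres_le_dres_iff {Θ Θ' : LatticeCon' (M3 B)} : dres Θ ≤ dres Θ' ↔ Θ ≤ Θ' := by
  constructor
  · intro h
    rw [← hat_dres Θ, ← hat_dres Θ']
    exact hat_mono h
  · exact dres_mono

/-- Joins of two principal congruences become principal in `M3 B`. -/
lemma hat_gen_sup {a b c d : B} (hab : a ≤ b) (hcd : c ≤ d) :
    hat (gen a b ⊔ gen c d)
      = gen (mk (a, c, a ⊓ c) (isBool_pair a c)) (mk (b, d, b ⊓ d) (isBool_pair b d)) := by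
  set θ := gen a b ⊔ gen c d with hθ
  have hθab : θ.r a b := le_r le_sup_left (gen_r a b)
  have hθcd : θ.r c d := le_r le_sup_right (gen_r c d)
  refine le_antisymm ?_ ?_
  · have hd := diag_r_of_r (Θ := gen (mk (a, c, a ⊓ c) (isBool_pair a c))
      (mk (b, d, b ⊓ d) (isBool_pair b d))) (gen_r _ _)
    have h1 : gen a b ≤ dres (gen (mk (a, c, a ⊓ c) (isBool_pair a c))
        (mk (b, d, b ⊓ d) (isBool_pair b d))) := gen_le hd.1
    have h2 : gen c d ≤ dres (gen (mk (a, c, a ⊓ c) (isBool_pair a c))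
        (mk (b, d, b ⊓ d) (isBool_pair b d))) := gen_le hd.2.1
    have hle : θ ≤ dres (gen (mk (a, c, a ⊓ c) (isBool_pair a c))
        (mk (b, d, b ⊓ d) (isBool_pair b d))) := sup_le h1 h2
    calc hat θ ≤ hat (dres (gen (mk (a, c, a ⊓ c) (isBool_pair a c))
        (mk (b, d, b ⊓ d) (isBool_pair b d)))) := hat_mono hle
      _ = _ := hat_dres _
  · exact gen_le ⟨hθab, hθcd, θ.inf_comp hθab hθcd⟩

end Main

end M3

end Booleans


section Chain

universe w

/-- A packaged lattice. -/
structure PL : Type (w + 1) where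
  carrier : Type w
  str : Lattice carrier

variable (L : Type w) [Lattice L]

/-- The tower `L, M3 L, M3 (M3 L), ...`. -/
def chain : ℕ → PL.{w} := fun n =>
  Nat.rec ⟨L, inferInstance⟩ (fun _ p => ⟨@M3 p.carrier p.str, @M3.instLattice p.carrier p.str⟩) n

/-- The `n`-th stage of the tower. -/
def A (n : ℕ) : Type w := (chain L n).carrier

instance iA (n : ℕ) : Lattice (A L n) := (chain L n).str

/-- The diagonal step embedding of the tower. -/
def step (n : ℕ) : A L n → A L (n + 1) := fun a => @M3.diag (A L n) (iA L n) a

lemma step_sup (n : ℕ) (a b : A L n) : step L n (a ⊔ b) = step L n a ⊔ step L n b :=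
  @M3.diag_sup (A L n) (iA L n) a b

lemma step_inf (n : ℕ) (a b : A L n) : step L n (a ⊓ b) = step L n a ⊓ step L n b :=
  @M3.diag_inf (A L n) (iA L n) a b

lemma step_le_iff (n : ℕ) {a b : A L n} : step L n a ≤ step L n b ↔ a ≤ b :=
  @M3.diag_le_iff (A L n) (iA L n) a b

lemma step_injective (n : ℕ) : Function.Injective (step L n) :=
  @M3.diag_injective (A L n) (iA L n)

/-- Transition maps of the tower. -/
def G {n m : ℕ} (h : n ≤ m) : A L n → A L m :=
  Nat.leRecOn h (fun {k} a => step L k a)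

lemma G_self {n : ℕ} (a : A L n) : G L (le_refl n) a = a := Nat.leRecOn_self a

lemma G_succ {n m : ℕ} (h : n ≤ m) {h2 : n ≤ m + 1} (a : A L n) :
    G L h2 a = step L m (G L h a) := Nat.leRecOn_succ h a

lemma G_trans {n m k : ℕ} (h1 : n ≤ m) (h2 : m ≤ k) (a : A L n) :
    G L (h1.trans h2) a = G L h2 (G L h1 a) := Nat.leRecOn_trans h1 h2 a

lemma G_sup {n m : ℕ} (h : n ≤ m) (a b : A L n) : G L h (a ⊔ b) = G L h a ⊔ G L h b := by
  induction m, h using Nat.le_induction with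
  | base => rw [G_self, G_self, G_self]
  | succ m h ih => rw [G_succ L h, G_succ L h, G_succ L h, ih, step_sup]

lemma G_inf {n m : ℕ} (h : n ≤ m) (a b : A L n) : G L h (a ⊓ b) = G L h a ⊓ G L h b := by
  induction m, h using Nat.le_induction with
  | base => rw [G_self, G_self, G_self]
  | succ m h ih => rw [G_succ L h, G_succ L h, G_succ L h, ih, step_inf]

lemma G_le_iff {n m : ℕ} (h : n ≤ m) {a b : A L n} : G L h a ≤ G L h b ↔ a ≤ b := by
  induction m, h using Nat.le_induction with
  | base => rw [G_self, G_self]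
  | succ m h ih => rw [G_succ L h, G_succ L h, step_le_iff]; exact ih

lemma G_mono {n m : ℕ} (h : n ≤ m) {a b : A L n} (hab : a ≤ b) : G L h a ≤ G L h b :=
  (G_le_iff L h).2 hab

lemma G_injective {n m : ℕ} (h : n ≤ m) : Function.Injective (G L h) := fun a b hab =>
  le_antisymm ((G_le_iff L h).1 hab.le) ((G_le_iff L h).1 hab.ge)

end Chain


section Colimit

universe w

variable (L : Type w) [Lattice L]

/-- Elements of the tower. -/
abbrev pre : Type w := Σ n, A L n

/-- Two tower elements are identified if they agree at some common later stage. -/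
def prerel (s t : pre L) : Prop :=
  ∃ (N : ℕ) (h1 : s.1 ≤ N) (h2 : t.1 ≤ N), G L h1 s.2 = G L h2 t.2

/-- Order on tower elements. -/
def preLe (s t : pre L) : Prop :=
  ∃ (N : ℕ) (h1 : s.1 ≤ N) (h2 : t.1 ≤ N), G L h1 s.2 ≤ G L h2 t.2

variable {L}

lemma prerel_iff_forall {s t : pre L} : prerel L s t ↔
    ∀ (N : ℕ) (h1 : s.1 ≤ N) (h2 : t.1 ≤ N), G L h1 s.2 = G L h2 t.2 := by
  constructor
  · rintro ⟨N0, k1, k2, he⟩ N h1 h2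
    have hM1 : N ≤ N ⊔ N0 := le_sup_left
    have hM2 : N0 ≤ N ⊔ N0 := le_sup_right
    apply G_injective L hM1
    calc G L hM1 (G L h1 s.2) = G L (h1.trans hM1) s.2 := (G_trans L h1 hM1 s.2).symm
      _ = G L (k1.trans hM2) s.2 := rfl
      _ = G L hM2 (G L k1 s.2) := G_trans L k1 hM2 s.2
      _ = G L hM2 (G L k2 t.2) := by rw [he]
      _ = G L (k2.trans hM2) t.2 := (G_trans L k2 hM2 t.2).symm
      _ = G L (h2.trans hM1) t.2 := rfl
      _ = G L hM1 (G L h2 t.2) := G_trans L h2 hM1 t.2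
  · intro h
    exact ⟨s.1 ⊔ t.1, le_sup_left, le_sup_right, h _ _ _⟩

lemma preLe_iff_forall {s t : pre L} : preLe L s t ↔
    ∀ (N : ℕ) (h1 : s.1 ≤ N) (h2 : t.1 ≤ N), G L h1 s.2 ≤ G L h2 t.2 := by
  constructor
  · rintro ⟨N0, k1, k2, he⟩ N h1 h2
    have hM1 : N ≤ N ⊔ N0 := le_sup_left
    have hM2 : N0 ≤ N ⊔ N0 := le_sup_right
    rw [← G_le_iff L hM1]
    calc G L hM1 (G L h1 s.2) = G L (h1.trans hM1) s.2 := (G_trans L h1 hM1 s.2).symm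
      _ = G L (k1.trans hM2) s.2 := rfl
      _ = G L hM2 (G L k1 s.2) := G_trans L k1 hM2 s.2
      _ ≤ G L hM2 (G L k2 t.2) := G_mono L hM2 he
      _ = G L (k2.trans hM2) t.2 := (G_trans L k2 hM2 t.2).symm
      _ = G L (h2.trans hM1) t.2 := rfl
      _ = G L hM1 (G L h2 t.2) := G_trans L h2 hM1 t.2
  · intro h
    exact ⟨s.1 ⊔ t.1, le_sup_left, le_sup_right, h _ _ _⟩

lemma prerel_refl (s : pre L) : prerel L s s := ⟨s.1, le_refl _, le_refl _, rfl⟩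

lemma prerel_symm {s t : pre L} (h : prerel L s t) : prerel L t s := by
  obtain ⟨N, h1, h2, he⟩ := h
  exact ⟨N, h2, h1, he.symm⟩

lemma prerel_trans {s t u : pre L} (h : prerel L s t) (h' : prerel L t u) : prerel L s u := by
  have hN : ∀ x : pre L, x.1 ≤ s.1 ⊔ t.1 ⊔ u.1 → True := fun _ _ => trivial
  have hs : s.1 ≤ s.1 ⊔ t.1 ⊔ u.1 := le_sup_left.trans le_sup_left
  have ht : t.1 ≤ s.1 ⊔ t.1 ⊔ u.1 := le_sup_right.trans le_sup_left
  have hu : u.1 ≤ s.1 ⊔ t.1 ⊔ u.1 := le_sup_right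
  exact ⟨_, hs, hu, (prerel_iff_forall.1 h _ hs ht).trans (prerel_iff_forall.1 h' _ ht hu)⟩

variable (L) in
instance preSetoid : Setoid (pre L) :=
  ⟨prerel L, ⟨prerel_refl, prerel_symm, prerel_trans⟩⟩

variable (L) in
/-- The direct limit of the tower. -/
def K : Type w := Quotient (preSetoid L)

variable (L) in
/-- Canonical maps into the direct limit. -/
def e (n : ℕ) (a : A L n) : K L := Quotient.mk (preSetoid L) ⟨n, a⟩

lemma preLe_congr {s s' t t' : pre L} (hs : prerel L s s') (ht : prerel L t t') :
    preLe L s t ↔ preLe L s' t' := by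
  constructor
  · intro h
    set N := s.1 ⊔ t.1 ⊔ s'.1 ⊔ t'.1 with hN
    have h1 : s.1 ≤ N := ((le_sup_left.trans le_sup_left).trans le_sup_left)
    have h2 : t.1 ≤ N := (le_sup_right.trans le_sup_left).trans le_sup_left
    have h3 : s'.1 ≤ N := le_sup_right.trans le_sup_left
    have h4 : t'.1 ≤ N := le_sup_right
    refine ⟨N, h3, h4, ?_⟩
    rw [← prerel_iff_forall.1 hs N h1 h3, ← prerel_iff_forall.1 ht N h2 h4]
    exact preLe_iff_forall.1 h N h1 h2
  · intro h
    set N := s.1 ⊔ t.1 ⊔ s'.1 ⊔ t'.1 with hN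
    have h1 : s.1 ≤ N := ((le_sup_left.trans le_sup_left).trans le_sup_left)
    have h2 : t.1 ≤ N := (le_sup_right.trans le_sup_left).trans le_sup_left
    have h3 : s'.1 ≤ N := le_sup_right.trans le_sup_left
    have h4 : t'.1 ≤ N := le_sup_right
    refine ⟨N, h1, h2, ?_⟩
    rw [prerel_iff_forall.1 hs N h1 h3, prerel_iff_forall.1 ht N h2 h4]
    exact preLe_iff_forall.1 h N h3 h4

variable (L) in
instance instPartialOrderK : PartialOrder (K L) where
  le := Quotient.lift₂ (fun s t => preLe L s t)
    (fun _ _ _ _ hs ht => propext (preLe_congr hs ht))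
  le_refl x := by
    refine Quotient.inductionOn x (fun s => ?_)
    exact ⟨s.1, le_refl _, le_refl _, le_refl _⟩
  le_trans x y z := by
    refine Quotient.inductionOn₃ x y z (fun s t u hst htu => ?_)
    have hs : s.1 ≤ s.1 ⊔ t.1 ⊔ u.1 := le_sup_left.trans le_sup_left
    have ht : t.1 ≤ s.1 ⊔ t.1 ⊔ u.1 := le_sup_right.trans le_sup_left
    have hu : u.1 ≤ s.1 ⊔ t.1 ⊔ u.1 := le_sup_right
    exact ⟨_, hs, hu, (preLe_iff_forall.1 hst _ hs ht).trans (preLe_iff_forall.1 htu _ ht hu)⟩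
  le_antisymm x y := by
    refine Quotient.inductionOn₂ x y (fun s t hst hts => ?_)
    refine Quotient.sound ?_
    have hs : s.1 ≤ s.1 ⊔ t.1 := le_sup_left
    have ht : t.1 ≤ s.1 ⊔ t.1 := le_sup_right
    exact ⟨_, hs, ht, le_antisymm (preLe_iff_forall.1 hst _ hs ht)
      (preLe_iff_forall.1 hts _ ht hs)⟩

lemma e_le_e_iff {n : ℕ} {a b : A L n} : e L n a ≤ e L n b ↔ a ≤ b := by
  constructor
  · intro h
    obtain ⟨N, h1, h2, hle⟩ := (h : preLe L ⟨n, a⟩ ⟨n, b⟩)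
    have : G L h1 a ≤ G L h1 b := by
      calc G L h1 a ≤ G L h2 b := hle
        _ = G L h1 b := rfl
    exact (G_le_iff L h1).1 this
  · intro h
    exact ⟨n, le_refl _, le_refl _, by rw [G_self, G_self]; exact h⟩

lemma e_eq_e {n m : ℕ} (h : n ≤ m) (a : A L n) : e L n a = e L m (G L h a) := by
  refine Quotient.sound ?_
  exact ⟨m, h, le_refl m, by rw [G_self L]⟩

lemma e_injective (n : ℕ) : Function.Injective (e L n) := by
  intro a b hab
  have h := Quotient.exact hab
  obtain ⟨N, h1, h2, he⟩ := h
  have : G L h1 a = G L h1 b := by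
    calc G L h1 a = G L h2 b := he
      _ = G L h1 b := rfl
  exact G_injective L h1 this

lemma rep2 (x y : K L) (n0 : ℕ) : ∃ (n : ℕ) (a b : A L n), n0 ≤ n ∧ x = e L n a ∧ y = e L n b := by
  refine Quotient.inductionOn₂ x y (fun s t => ?_)
  refine ⟨s.1 ⊔ t.1 ⊔ n0, G L (le_sup_left.trans le_sup_left) s.2,
    G L ((le_sup_right.trans le_sup_left)) t.2, le_sup_right, ?_, ?_⟩
  · exact e_eq_e (le_sup_left.trans le_sup_left) s.2
  · exact e_eq_e (le_sup_right.trans le_sup_left) t.2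

end Colimit


section KLattice

universe w

variable {L : Type w} [Lattice L]

/-- Representative of the join in the limit. -/
abbrev preSup (s t : pre L) : pre L :=
  ⟨s.1 ⊔ t.1, G L le_sup_left s.2 ⊔ G L le_sup_right t.2⟩

/-- Representative of the meet in the limit. -/
abbrev preInf (s t : pre L) : pre L :=
  ⟨s.1 ⊔ t.1, G L le_sup_left s.2 ⊓ G L le_sup_right t.2⟩

lemma G_preSup (s t : pre L) {N : ℕ} (h : s.1 ⊔ t.1 ≤ N) (h1 : s.1 ≤ N) (h2 : t.1 ≤ N) :
    G L h (preSup s t).2 = G L h1 s.2 ⊔ G L h2 t.2 := by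
  show G L h (G L le_sup_left s.2 ⊔ G L le_sup_right t.2) = _
  rw [G_sup]
  rw [← G_trans L le_sup_left h, ← G_trans L le_sup_right h]

lemma G_preInf (s t : pre L) {N : ℕ} (h : s.1 ⊔ t.1 ≤ N) (h1 : s.1 ≤ N) (h2 : t.1 ≤ N) :
    G L h (preInf s t).2 = G L h1 s.2 ⊓ G L h2 t.2 := by
  show G L h (G L le_sup_left s.2 ⊓ G L le_sup_right t.2) = _
  rw [G_inf]
  rw [← G_trans L le_sup_left h, ← G_trans L le_sup_right h]

lemma preSup_congr {s s' t t' : pre L} (hs : prerel L s s') (ht : prerel L t t') :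
    prerel L (preSup s t) (preSup s' t') := by
  set N := s.1 ⊔ t.1 ⊔ (s'.1 ⊔ t'.1) with hN
  have hst : s.1 ⊔ t.1 ≤ N := le_sup_left
  have hst' : s'.1 ⊔ t'.1 ≤ N := le_sup_right
  have h1 : s.1 ≤ N := le_sup_left.trans hst
  have h2 : t.1 ≤ N := le_sup_right.trans hst
  have h3 : s'.1 ≤ N := le_sup_left.trans hst'
  have h4 : t'.1 ≤ N := le_sup_right.trans hst'
  refine ⟨N, hst, hst', ?_⟩
  rw [G_preSup s t hst h1 h2, G_preSup s' t' hst' h3 h4,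
    prerel_iff_forall.1 hs N h1 h3, prerel_iff_forall.1 ht N h2 h4]

lemma preInf_congr {s s' t t' : pre L} (hs : prerel L s s') (ht : prerel L t t') :
    prerel L (preInf s t) (preInf s' t') := by
  set N := s.1 ⊔ t.1 ⊔ (s'.1 ⊔ t'.1) with hN
  have hst : s.1 ⊔ t.1 ≤ N := le_sup_left
  have hst' : s'.1 ⊔ t'.1 ≤ N := le_sup_right
  have h1 : s.1 ≤ N := le_sup_left.trans hst
  have h2 : t.1 ≤ N := le_sup_right.trans hst
  have h3 : s'.1 ≤ N := le_sup_left.trans hst'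
  have h4 : t'.1 ≤ N := le_sup_right.trans hst'
  refine ⟨N, hst, hst', ?_⟩
  rw [G_preInf s t hst h1 h2, G_preInf s' t' hst' h3 h4,
    prerel_iff_forall.1 hs N h1 h3, prerel_iff_forall.1 ht N h2 h4]

variable (L) in
instance instLatticeK : Lattice (K L) where
  sup := Quotient.lift₂ (fun s t => (Quotient.mk (preSetoid L) (preSup s t) : K L))
    (fun _ _ _ _ hs ht => Quotient.sound (preSup_congr hs ht))
  le_sup_left x y := by
    refine Quotient.inductionOn₂ x y (fun s t => ?_)
    refine ⟨s.1 ⊔ t.1, le_sup_left, le_refl _, ?_⟩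
    rw [G_self L, show G L (le_sup_left : s.1 ≤ s.1 ⊔ t.1) s.2
      = G L (le_sup_left : s.1 ≤ s.1 ⊔ t.1) s.2 from rfl]
    exact le_sup_left
  le_sup_right x y := by
    refine Quotient.inductionOn₂ x y (fun s t => ?_)
    refine ⟨s.1 ⊔ t.1, le_sup_right, le_refl _, ?_⟩
    rw [G_self L]
    exact le_sup_right
  sup_le x y z := by
    refine Quotient.inductionOn₃ x y z (fun s t u hsu htu => ?_)
    set N := s.1 ⊔ t.1 ⊔ u.1 with hN
    have hst : s.1 ⊔ t.1 ≤ N := le_sup_left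
    have h1 : s.1 ≤ N := le_sup_left.trans hst
    have h2 : t.1 ≤ N := le_sup_right.trans hst
    have hu : u.1 ≤ N := le_sup_right
    refine ⟨N, hst, hu, ?_⟩
    rw [G_preSup s t hst h1 h2]
    exact sup_le (preLe_iff_forall.1 hsu N h1 hu) (preLe_iff_forall.1 htu N h2 hu)
  inf := Quotient.lift₂ (fun s t => (Quotient.mk (preSetoid L) (preInf s t) : K L))
    (fun _ _ _ _ hs ht => Quotient.sound (preInf_congr hs ht))
  inf_le_left x y := by
    refine Quotient.inductionOn₂ x y (fun s t => ?_)
    refine ⟨s.1 ⊔ t.1, le_refl _, le_sup_left, ?_⟩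
    rw [G_self L]
    exact inf_le_left
  inf_le_right x y := by
    refine Quotient.inductionOn₂ x y (fun s t => ?_)
    refine ⟨s.1 ⊔ t.1, le_refl _, le_sup_right, ?_⟩
    rw [G_self L]
    exact inf_le_right
  le_inf x y z := by
    refine Quotient.inductionOn₃ x y z (fun s t u hst hsu => ?_)
    set N := s.1 ⊔ (t.1 ⊔ u.1) with hN
    have htu : t.1 ⊔ u.1 ≤ N := le_sup_right
    have h1 : t.1 ≤ N := le_sup_left.trans htu
    have h2 : u.1 ≤ N := le_sup_right.trans htu
    have hs : s.1 ≤ N := le_sup_left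
    refine ⟨N, hs, htu, ?_⟩
    rw [G_preInf t u htu h1 h2]
    exact le_inf (preLe_iff_forall.1 hst N hs h1) (preLe_iff_forall.1 hsu N hs h2)

lemma e_sup {n : ℕ} (a b : A L n) : e L n a ⊔ e L n b = e L n (a ⊔ b) := by
  refine Quotient.sound ?_
  refine ⟨n ⊔ n, le_refl _, le_sup_left, ?_⟩
  show G L (le_refl _) ((preSup ⟨n, a⟩ ⟨n, b⟩).2) = _
  rw [G_self L]
  show G L le_sup_left a ⊔ G L le_sup_right b = G L le_sup_left (a ⊔ b)
  rw [G_sup]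

lemma e_inf {n : ℕ} (a b : A L n) : e L n a ⊓ e L n b = e L n (a ⊓ b) := by
  refine Quotient.sound ?_
  refine ⟨n ⊔ n, le_refl _, le_sup_left, ?_⟩
  show G L (le_refl _) ((preInf ⟨n, a⟩ ⟨n, b⟩).2) = _
  rw [G_self L]
  show G L le_sup_left a ⊓ G L le_sup_right b = G L le_sup_left (a ⊓ b)
  rw [G_inf]

end KLattice


section KCon

universe w

variable {L : Type w} [Lattice L]

/-- Restriction of congruences along `e n`. -/
def restr (n : ℕ) (Θ : LatticeCon' (K L)) : LatticeCon' (A L n) :=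
  conMap (e L n) (fun a b => (e_sup a b).symm) (fun a b => (e_inf a b).symm) Θ

lemma restr_r (n : ℕ) (Θ : LatticeCon' (K L)) (a b : A L n) :
    (restr n Θ).r a b ↔ Θ.r (e L n a) (e L n b) := Iff.rfl

lemma restr_mono (n : ℕ) {Θ Θ' : LatticeCon' (K L)} (h : Θ ≤ Θ') : restr n Θ ≤ restr n Θ' :=
  conMap_mono _ _ _ h

/-- Step restriction within the tower. -/
def sres (n : ℕ) : LatticeCon' (A L (n + 1)) → LatticeCon' (A L n) :=
  @M3.dres (A L n) (iA L n)

/-- Step lift within the tower. -/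
def shat (n : ℕ) : LatticeCon' (A L n) → LatticeCon' (A L (n + 1)) :=
  @M3.hat (A L n) (iA L n)

lemma sres_shat (n : ℕ) (θ : LatticeCon' (A L n)) : sres n (shat n θ) = θ :=
  @M3.dres_hat (A L n) (iA L n) θ

lemma shat_sres (n : ℕ) (Θ : LatticeCon' (A L (n + 1))) : shat n (sres n Θ) = Θ :=
  @M3.hat_dres (A L n) (iA L n) Θ

lemma shat_r_step (n : ℕ) (θ : LatticeCon' (A L n)) (a b : A L n) :
    (shat n θ).r (step L n a) (step L n b) ↔ θ.r a b :=
  ⟨fun h => h.1, fun h => ⟨h, h, h⟩⟩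

/-- Iterated lift of congruences up the tower. -/
def hatUp {n m : ℕ} (h : n ≤ m) : LatticeCon' (A L n) → LatticeCon' (A L m) :=
  Nat.leRecOn h (fun {k} θ => shat k θ)

lemma hatUp_self {n : ℕ} (θ : LatticeCon' (A L n)) : hatUp (le_refl n) θ = θ := by
  unfold hatUp
  exact Nat.leRecOn_self (C := fun k => LatticeCon' (A L k)) θ

lemma hatUp_succ {n m : ℕ} (h : n ≤ m) {h2 : n ≤ m + 1} (θ : LatticeCon' (A L n)) :
    hatUp h2 θ = shat m (hatUp h θ) := by
  unfold hatUp
  exact Nat.leRecOn_succ (C := fun k => LatticeCon' (A L k)) h θ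

lemma hatUp_lift {n m m' : ℕ} (h : n ≤ m) (h' : m ≤ m')
    (θ : LatticeCon' (A L n)) (a b : A L m) :
    (hatUp (h.trans h') θ).r (G L h' a) (G L h' b) ↔ (hatUp h θ).r a b := by
  induction m', h' using Nat.le_induction with
  | base =>
    rw [G_self L, G_self L]
  | succ m' h' ih =>
    have hnm' : n ≤ m' := h.trans h'
    rw [G_succ L h', G_succ L h', hatUp_succ hnm']
    exact (shat_r_step m' (hatUp hnm' θ) _ _).trans ih

lemma hatUp_mono {n m : ℕ} (h : n ≤ m) {θ θ' : LatticeCon' (A L n)} (hle : θ ≤ θ') :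
    hatUp h θ ≤ hatUp h θ' := by
  induction m, h using Nat.le_induction with
  | base => rw [hatUp_self, hatUp_self]; exact hle
  | succ m h ih =>
    rw [hatUp_succ h, hatUp_succ h]
    exact @M3.hat_mono (A L m) (iA L m) _ _ ih

/-- Extension of a congruence from stage `n` of the tower to the limit. -/
def colimExt (n : ℕ) (θ : LatticeCon' (A L n)) : LatticeCon' (K L) where
  r x y := ∃ (m : ℕ) (h : n ≤ m) (a b : A L m),
    x = e L m a ∧ y = e L m b ∧ (hatUp h θ).r a b
  iseqv := by
    refine ⟨fun x => ?_, ?_, ?_⟩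
    · obtain ⟨m, a, b, hm, hx, hy⟩ := rep2 x x n
      exact ⟨m, hm, a, a, hx, hx, (hatUp hm θ).iseqv.refl a⟩
    · rintro x y ⟨m, h, a, b, hx, hy, hr⟩
      exact ⟨m, h, b, a, hy, hx, (hatUp h θ).iseqv.symm hr⟩
    · rintro x y z ⟨m1, h1, a1, b1, hx1, hy1, hr1⟩ ⟨m2, h2, a2, b2, hy2, hz2, hr2⟩
      set M := m1 ⊔ m2 with hM
      have hm1 : m1 ≤ M := le_sup_left
      have hm2 : m2 ≤ M := le_sup_right
      have hb : G L hm1 b1 = G L hm2 a2 := by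
        apply e_injective M
        rw [← e_eq_e hm1, ← e_eq_e hm2, ← hy1, ← hy2]
      refine ⟨M, h1.trans hm1, G L hm1 a1, G L hm2 b2, ?_, ?_, ?_⟩
      · rw [hx1]; exact e_eq_e hm1 a1
      · rw [hz2]; exact e_eq_e hm2 b2
      · have r1 : (hatUp (h1.trans hm1) θ).r (G L hm1 a1) (G L hm1 b1) :=
          (hatUp_lift h1 hm1 θ a1 b1).2 hr1
        have r2 : (hatUp (h1.trans hm1) θ).r (G L hm2 a2) (G L hm2 b2) :=
          (hatUp_lift h2 hm2 θ a2 b2).2 hr2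
        rw [hb] at r1
        exact (hatUp (h1.trans hm1) θ).iseqv.trans r1 r2
  sup_comp := by
    rintro x y x' y' ⟨m1, h1, a1, b1, hx1, hy1, hr1⟩ ⟨m2, h2, a2, b2, hx2, hy2, hr2⟩
    set M := m1 ⊔ m2 with hM
    have hm1 : m1 ≤ M := le_sup_left
    have hm2 : m2 ≤ M := le_sup_right
    have r1 : (hatUp (h1.trans hm1) θ).r (G L hm1 a1) (G L hm1 b1) :=
      (hatUp_lift h1 hm1 θ a1 b1).2 hr1
    have r2 : (hatUp (h1.trans hm1) θ).r (G L hm2 a2) (G L hm2 b2) :=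
      (hatUp_lift h2 hm2 θ a2 b2).2 hr2
    refine ⟨M, h1.trans hm1, G L hm1 a1 ⊔ G L hm2 a2, G L hm1 b1 ⊔ G L hm2 b2, ?_, ?_, ?_⟩
    · rw [hx1, hx2, e_eq_e hm1 a1, e_eq_e hm2 a2, e_sup]
    · rw [hy1, hy2, e_eq_e hm1 b1, e_eq_e hm2 b2, e_sup]
    · exact (hatUp (h1.trans hm1) θ).sup_comp r1 r2
  inf_comp := by
    rintro x y x' y' ⟨m1, h1, a1, b1, hx1, hy1, hr1⟩ ⟨m2, h2, a2, b2, hx2, hy2, hr2⟩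
    set M := m1 ⊔ m2 with hM
    have hm1 : m1 ≤ M := le_sup_left
    have hm2 : m2 ≤ M := le_sup_right
    have r1 : (hatUp (h1.trans hm1) θ).r (G L hm1 a1) (G L hm1 b1) :=
      (hatUp_lift h1 hm1 θ a1 b1).2 hr1
    have r2 : (hatUp (h1.trans hm1) θ).r (G L hm2 a2) (G L hm2 b2) :=
      (hatUp_lift h2 hm2 θ a2 b2).2 hr2
    refine ⟨M, h1.trans hm1, G L hm1 a1 ⊓ G L hm2 a2, G L hm1 b1 ⊓ G L hm2 b2, ?_, ?_, ?_⟩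
    · rw [hx1, hx2, e_eq_e hm1 a1, e_eq_e hm2 a2, e_inf]
    · rw [hy1, hy2, e_eq_e hm1 b1, e_eq_e hm2 b2, e_inf]
    · exact (hatUp (h1.trans hm1) θ).inf_comp r1 r2

lemma restr_colimExt (n : ℕ) (θ : LatticeCon' (A L n)) : restr n (colimExt n θ) = θ := by
  refine ext' fun a b => ?_
  constructor
  · rintro ⟨m, h, a', b', hx, hy, hr⟩
    have ha : a' = G L h a := e_injective m (by rw [← e_eq_e h, ← hx])
    have hb : b' = G L h b := e_injective m (by rw [← e_eq_e h, ← hy])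
    rw [ha, hb] at hr
    have h2 := (hatUp_lift (le_refl n) h θ a b).1 hr
    rwa [hatUp_self] at h2
  · intro h
    exact ⟨n, le_refl n, a, b, rfl, rfl, by rwa [hatUp_self]⟩

end KCon


section KIso

universe w

variable {L : Type w} [Lattice L]

/-- Restriction of congruences along a transition map. -/
def GconMap {n m : ℕ} (h : n ≤ m) : LatticeCon' (A L m) → LatticeCon' (A L n) :=
  conMap (G L h) (fun a b => G_sup L h a b) (fun a b => G_inf L h a b)

lemma GconMap_r {n m : ℕ} (h : n ≤ m) (ψ : LatticeCon' (A L m)) (a b : A L n) :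
    (GconMap h ψ).r a b ↔ ψ.r (G L h a) (G L h b) := Iff.rfl

lemma GconMap_refl {n : ℕ} (ψ : LatticeCon' (A L n)) : GconMap (le_refl n) ψ = ψ := by
  refine ext' fun a b => ?_
  rw [GconMap_r, G_self L, G_self L]

lemma GconMap_succ {n m : ℕ} (h : n ≤ m) {h2 : n ≤ m + 1} (ψ : LatticeCon' (A L (m + 1))) :
    GconMap h2 ψ = GconMap h (sres m ψ) := by
  refine ext' fun a b => ?_
  rw [GconMap_r, GconMap_r, G_succ L h, G_succ L h]
  exact Iff.rfl

lemma GconMap_le_iff {n m : ℕ} (h : n ≤ m) {ψ ψ' : LatticeCon' (A L m)} :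
    GconMap h ψ ≤ GconMap h ψ' ↔ ψ ≤ ψ' := by
  induction m, h using Nat.le_induction with
  | base => rw [GconMap_refl, GconMap_refl]
  | succ m h ih =>
    rw [GconMap_succ h, GconMap_succ h]
    refine ih.trans ?_
    exact @M3.dres_le_dres_iff (A L m) (iA L m) _ _

lemma restr_factor {n m : ℕ} (h : n ≤ m) (Θ : LatticeCon' (K L)) :
    restr n Θ = GconMap h (restr m Θ) := by
  refine ext' fun a b => ?_
  rw [restr_r, GconMap_r, restr_r, ← e_eq_e h, ← e_eq_e h]

lemma restr_le_imp {n : ℕ} {Θ Θ' : LatticeCon' (K L)} (hle : restr n Θ ≤ restr n Θ') :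
    Θ ≤ Θ' := by
  intro x y hr
  obtain ⟨m, a, b, hnm, hx, hy⟩ := rep2 x y n
  rw [restr_factor hnm Θ, restr_factor hnm Θ'] at hle
  have h2 : restr m Θ ≤ restr m Θ' := (GconMap_le_iff hnm).1 hle
  subst hx hy
  exact h2 hr

lemma restr_injective (n : ℕ) {Θ Θ' : LatticeCon' (K L)} (h : restr n Θ = restr n Θ') :
    Θ = Θ' :=
  le_antisymm (restr_le_imp h.le) (restr_le_imp h.ge)

variable (L) in
/-- The restriction order-isomorphism between congruences of the limit and of stage `n`. -/
def R (n : ℕ) : LatticeCon' (K L) ≃o LatticeCon' (A L n) where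
  toFun := restr n
  invFun := colimExt n
  left_inv Θ := restr_injective n (restr_colimExt n (restr n Θ))
  right_inv := restr_colimExt n
  map_rel_iff' := ⟨fun h => restr_le_imp h, fun h => restr_mono n h⟩

lemma R_symm_apply (n : ℕ) (θ : LatticeCon' (A L n)) : (R L n).symm θ = colimExt n θ := rfl

lemma gen_e (n : ℕ) (a b : A L n) :
    gen (e L n a) (e L n b) = (R L n).symm (gen a b) := by
  refine le_antisymm ?_ ?_
  · refine gen_le ?_
    have h0 : (restr n ((R L n).symm (gen a b))).r a b := by
      rw [show restr n ((R L n).symm (gen a b)) = gen a b from (R L n).apply_symm_apply _]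
      exact gen_r a b
    exact h0
  · have h1 : gen a b ≤ restr n (gen (e L n a) (e L n b)) :=
      gen_le ((restr_r n _ a b).2 (gen_r _ _))
    have h2 : (R L n).symm (gen a b) ≤ (R L n).symm (restr n (gen (e L n a) (e L n b))) :=
      (R L n).symm.monotone h1
    rwa [show (R L n).symm (restr n (gen (e L n a) (e L n b))) = gen (e L n a) (e L n b) from
      (R L n).symm_apply_apply _] at h2

end KIso


section KPrincipal

universe w

variable {L : Type w} [Lattice L]

lemma GconMap_sres (n : ℕ) (ψ : LatticeCon' (A L (n + 1))) :
    GconMap (Nat.le_succ n) ψ = sres n ψ := by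
  refine ext' fun a b => ?_
  rw [GconMap_r, G_succ L (le_refl n), G_succ L (le_refl n), G_self L, G_self L]
  exact Iff.rfl

lemma R_symm_shat (n : ℕ) (θ : LatticeCon' (A L n)) :
    (R L n).symm θ = (R L (n + 1)).symm (shat n θ) := by
  apply restr_injective n
  have e1 : restr n ((R L n).symm θ) = θ := (R L n).apply_symm_apply θ
  have e2 : restr (n + 1) ((R L (n + 1)).symm (shat n θ)) = shat n θ :=
    (R L (n + 1)).apply_symm_apply _
  rw [e1, restr_factor (Nat.le_succ n), e2, GconMap_sres, sres_shat]

lemma principal_sup_K (α β : LatticeCon' (K L)) (hα : α.IsPrincipal) (hβ : β.IsPrincipal) :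
    (α ⊔ β).IsPrincipal := by
  obtain ⟨x, y, rfl⟩ := IsPrincipal.eq_gen hα
  obtain ⟨x', y', rfl⟩ := IsPrincipal.eq_gen hβ
  obtain ⟨n, a0, b0, _, hx, hy⟩ := rep2 x y 0
  obtain ⟨m, c, d, hnm, hx', hy'⟩ := rep2 x' y' n
  set a := G L hnm a0 with ha
  set b := G L hnm b0 with hb
  have hx2 : x = e L m a := by rw [hx, e_eq_e hnm]
  have hy2 : y = e L m b := by rw [hy, e_eq_e hnm]
  subst hx2 hy2 hx' hy'
  rw [gen_e, gen_e, ← map_sup ((R L m).symm), gen_eq_gen_inf_sup a b, gen_eq_gen_inf_sup c d]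
  rw [R_symm_shat m]
  rw [show shat m (gen (a ⊓ b) (a ⊔ b) ⊔ gen (c ⊓ d) (c ⊔ d))
      = gen (M3.mk (a ⊓ b, c ⊓ d, (a ⊓ b) ⊓ (c ⊓ d)) (isBool_pair _ _))
        (M3.mk (a ⊔ b, c ⊔ d, (a ⊔ b) ⊓ (c ⊔ d)) (isBool_pair _ _)) from
    @M3.hat_gen_sup (A L m) (iA L m) _ _ _ _ inf_le_sup inf_le_sup]
  erw [← gen_e (m + 1)]
  exact isPrincipal_gen _ _

lemma princ_eq_conc_K (hne : Nonempty L) :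
    {γ : LatticeCon' (K L) | γ.IsPrincipal}
      = {γ : LatticeCon' (K L) | CompleteLattice.IsCompactElement γ} := by
  have hKne : Nonempty (K L) := ⟨e L 0 (hne.some : A L 0)⟩
  ext γ
  simp only [Set.mem_setOf_eq]
  constructor
  · exact isCompactElement_of_isPrincipal
  · exact isPrincipal_of_isCompact hKne principal_sup_K

end KPrincipal

section CompactTransport

variable {X Y : Type*} [CompleteLattice X] [CompleteLattice Y]

lemma isCompact_map (f : X ≃o Y) {x : X} (hx : CompleteLattice.IsCompactElement x) :
    CompleteLattice.IsCompactElement (f x) := by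
  intro s hs
  classical
  have h1 : x ≤ f.symm (sSup s) := by
    have := f.symm.monotone hs
    rwa [f.symm_apply_apply] at this
  rw [OrderIso.map_sSup, ← sSup_image] at h1
  obtain ⟨t, hts, hxt⟩ := hx _ h1
  refine ⟨t.image f, ?_, ?_⟩
  · intro y hy
    simp only [Finset.coe_image, Set.mem_image, Finset.mem_coe] at hy
    obtain ⟨z, hz, rfl⟩ := hy
    obtain ⟨w, hw, hwz⟩ := hts hz
    rw [← hwz, f.apply_symm_apply]
    exact hw
  · have h2 : f x ≤ f (t.sup id) := f.monotone hxt
    have h3 : f (t.sup id) = t.sup (fun z => f z) := by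
      refine Finset.comp_sup_eq_sup_comp f (fun u v => ?_) ?_
      · exact map_sup f u v
      · exact OrderIso.map_bot f
    rw [h3] at h2
    rw [Finset.sup_image]
    exact h2

/-- Transport of compact elements along an order isomorphism. -/
def concIso (f : X ≃o Y) :
    {x : X // CompleteLattice.IsCompactElement x} ≃o
      {y : Y // CompleteLattice.IsCompactElement y} where
  toFun x := ⟨f x.1, isCompact_map f x.2⟩
  invFun y := ⟨f.symm y.1, by
    have := isCompact_map f.symm y.2
    exact this⟩
  left_inv x := Subtype.ext (f.symm_apply_apply x.1)
  right_inv y := Subtype.ext (f.apply_symm_apply y.1)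
  map_rel_iff' := by
    intro x y
    exact f.le_iff_le

end CompactTransport


section Edge

lemma isCompact_bot {X : Type*} [CompleteLattice X] :
    CompleteLattice.IsCompactElement (⊥ : X) := fun s _ =>
  ⟨∅, by simp, by simp⟩

/-- An order isomorphism between two pointed subsingleton preorders. -/
def subsingletonOrderIso {X Y : Type*} [Preorder X] [Preorder Y] [Subsingleton X]
    [Subsingleton Y] (x0 : X) (y0 : Y) : X ≃o Y where
  toFun _ := y0
  invFun _ := x0
  left_inv _ := Subsingleton.elim _ _
  right_inv _ := Subsingleton.elim _ _
  map_rel_iff' {a b} := ⟨fun _ => (Subsingleton.elim a b) ▸ le_refl a, fun _ => le_refl y0⟩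

lemma latticeCon_subsingleton_of_isEmpty {X : Type*} [Lattice X] (h : IsEmpty X) :
    Subsingleton (LatticeCon' X) :=
  ⟨fun c d => LatticeCon'.ext' (fun a _ => h.elim a)⟩

lemma latticeCon_subsingleton_of_subsingleton {X : Type*} [Lattice X] [Subsingleton X] :
    Subsingleton (LatticeCon' X) := by
  refine ⟨fun c d => LatticeCon'.ext' (fun a b => ?_)⟩
  have hab : a = b := Subsingleton.elim a b
  subst hab
  exact ⟨fun _ => d.iseqv.refl a, fun _ => c.iseqv.refl a⟩

lemma isPrincipal_of_subsingleton {X : Type*} [Lattice X] [Nonempty X] [Subsingleton X]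
    (γ : LatticeCon' X) : γ.IsPrincipal := by
  obtain ⟨a⟩ := ‹Nonempty X›
  haveI := latticeCon_subsingleton_of_subsingleton (X := X)
  exact ⟨a, a, γ.iseqv.refl a, fun β _ => (Subsingleton.elim γ β).le⟩

end Edge

end PrincConc


/-- **Theorem.** If a distributive join-semilattice `S` with zero is representable,
i.e. `S ≅ Conc L` for some lattice `L`, then `S ≅ Conc K` for a lattice `K` in which
every compact congruence is principal (`Princ K = Conc K`). -/
theorem representable_semilattice_with_principal_eq_compact
    (S : Type u) [SemilatticeSup S] [OrderBot S]
    (hdist : ∀ a b c : S, c ≤ a ⊔ b → ∃ a' b' : S, a' ≤ a ∧ b' ≤ b ∧ c = a' ⊔ b')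
    (L : Type v) [Lattice L] (hrep : Nonempty (S ≃o LatticeCon'.Conc L)) :
    ∃ (K : Type v) (_ : Lattice K),
      Nonempty (S ≃o LatticeCon'.Conc K) ∧
      {γ : LatticeCon' K | γ.IsPrincipal} =
        {γ : LatticeCon' K | CompleteLattice.IsCompactElement γ} := by
  obtain ⟨f⟩ := hrep
  by_cases hL : Nonempty L
  · refine ⟨PrincConc.K L, PrincConc.instLatticeK L, ⟨?_⟩, PrincConc.princ_eq_conc_K hL⟩
    exact f.trans (PrincConc.concIso ((PrincConc.R L 0).symm) :
      LatticeCon'.Conc L ≃o LatticeCon'.Conc (PrincConc.K L))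
  · have hE : IsEmpty L := not_nonempty_iff.1 hL
    haveI h1 : Subsingleton (LatticeCon' L) := PrincConc.latticeCon_subsingleton_of_isEmpty hE
    haveI h2 : Subsingleton (LatticeCon' PUnit.{v+1}) :=
      PrincConc.latticeCon_subsingleton_of_subsingleton
    haveI h1' : Subsingleton (LatticeCon'.Conc L) := ⟨fun a b => Subtype.ext (Subsingleton.elim _ _)⟩
    haveI h2' : Subsingleton (LatticeCon'.Conc PUnit.{v+1}) :=
      ⟨fun a b => Subtype.ext (Subsingleton.elim _ _)⟩
    refine ⟨PUnit.{v+1}, inferInstance, ⟨?_⟩, ?_⟩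
    · exact f.trans (PrincConc.subsingletonOrderIso
        (⟨⊥, PrincConc.isCompact_bot⟩ : LatticeCon'.Conc L)
        (⟨⊥, PrincConc.isCompact_bot⟩ : LatticeCon'.Conc PUnit.{v+1}))
    · ext γ
      simp only [Set.mem_setOf_eq]
      constructor
      · intro _
        have : γ = ⊥ := Subsingleton.elim _ _
        rw [this]
        exact PrincConc.isCompact_bot
      · intro _
        exact PrincConc.isPrincipal_of_subsingleton γ
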